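/- Let E be a nonzero object of 𝒜 with v(cl E) = 1 and let c ∈ ℝ. If E is c⁺-stable, then E is c-semistable; likewise, if E is c⁻-stable, then E is c-semistable. -/

import Mathlib

open CategoryTheory CategoryTheory.Limits

/-- Cross-multiplied comparison `μ_c(x) ≤ μ_c(y)` of the slopes `μ_c = (d + c·v)/r`. -/
def slopeLE {Γ : Type*} [AddCommGroup Γ] (d r : Γ →+ ℝ) (v : Γ →+ ℤ) (c : ℝ)
    (x y : Γ) : Prop :=
  (d x + c * (v x : ℝ)) * r y ≤ (d y + c * (v y : ℝ)) * r x

/-- Cross-multiplied comparison `μ_c(x) < μ_c(y)` of the slopes `μ_c = (d + c·v)/r`. -/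
def slopeLT {Γ : Type*} [AddCommGroup Γ] (d r : Γ →+ ℝ) (v : Γ →+ ℤ) (c : ℝ)
    (x y : Γ) : Prop :=
  (d x + c * (v x : ℝ)) * r y < (d y + c * (v y : ℝ)) * r x

/-- A nonzero object `E` is `c`-semistable if `μ_c(F) ≤ μ_c(E)` for every subobject
`F ⊆ E` with `F ≠ 0`, `F ≠ E`. -/
def IsSemistableAt {C : Type*} [Category C] [Abelian C] {Γ : Type*} [AddCommGroup Γ]
    (cl : C → Γ) (d r : Γ →+ ℝ) (v : Γ →+ ℤ) (c : ℝ) (E : C) : Prop :=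
  ∀ (F : C) (f : F ⟶ E), Mono f → ¬ IsZero F → ¬ IsIso f →
    slopeLE d r v c (cl F) (cl E)

/-- A nonzero object `E` is `c`-stable if `μ_c(F) < μ_c(E)` for every subobject
`F ⊆ E` with `F ≠ 0`, `F ≠ E`. -/
def IsStableAt {C : Type*} [Category C] [Abelian C] {Γ : Type*} [AddCommGroup Γ]
    (cl : C → Γ) (d r : Γ →+ ℝ) (v : Γ →+ ℤ) (c : ℝ) (E : C) : Prop :=
  ∀ (F : C) (f : F ⟶ E), Mono f → ¬ IsZero F → ¬ IsIso f →
    slopeLT d r v c (cl F) (cl E)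

/-- `E` is `c⁺`-stable if it is `(c+ε)`-stable for all sufficiently small `ε > 0`. -/
def IsPlusStableAt {C : Type*} [Category C] [Abelian C] {Γ : Type*} [AddCommGroup Γ]
    (cl : C → Γ) (d r : Γ →+ ℝ) (v : Γ →+ ℤ) (c : ℝ) (E : C) : Prop :=
  ∃ δ > (0 : ℝ), ∀ ε : ℝ, 0 < ε → ε < δ → IsStableAt cl d r v (c + ε) E

/-- `E` is `c⁻`-stable if it is `(c−ε)`-stable for all sufficiently small `ε > 0`. -/
def IsMinusStableAt {C : Type*} [Category C] [Abelian C] {Γ : Type*} [AddCommGroup Γ]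
    (cl : C → Γ) (d r : Γ →+ ℝ) (v : Γ →+ ℤ) (c : ℝ) (E : C) : Prop :=
  ∃ δ > (0 : ℝ), ∀ ε : ℝ, 0 < ε → ε < δ → IsStableAt cl d r v (c - ε) E

/-- If a nonzero object `E` with `v(cl E) = 1` is `c⁺`-stable then it is `c`-semistable;
likewise, if `E` is `c⁻`-stable then it is `c`-semistable. -/
lemma affine_nonpos_of_small {A B δ : ℝ} (hδ : 0 < δ)
    (h : ∀ ε : ℝ, 0 < ε → ε < δ → A + B * ε < 0) : A ≤ 0 := by
  by_contra hA
  push_neg at hA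
  set ε := min (δ / 2) (A / (2 * (|B| + 1))) with hε
  have hB1 : (0:ℝ) < |B| + 1 := by positivity
  have hε0 : 0 < ε := lt_min (by linarith) (by positivity)
  have hεδ : ε < δ := lt_of_le_of_lt (min_le_left _ _) (by linarith)
  have h1 := h ε hε0 hεδ
  have h2 : ε ≤ A / (2 * (|B| + 1)) := min_le_right _ _
  have h3 : |B| * ε ≤ (|B| + 1) * (A / (2 * (|B| + 1))) := by
    apply mul_le_mul (by linarith [abs_nonneg B]) h2 hε0.le (by positivity)
  have h4 : (|B| + 1) * (A / (2 * (|B| + 1))) = A / 2 := by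
    field_simp
  have h5 : B * ε ≥ -(A / 2) := by
    have := neg_abs_le (B * ε)
    have : |B * ε| = |B| * ε := by rw [abs_mul, abs_of_pos hε0]
    nlinarith [neg_abs_le (B * ε)]
  linarith

theorem stmt_3 {C : Type*} [Category C] [Abelian C] {Γ : Type*} [AddCommGroup Γ]
    (cl : C → Γ) (d r : Γ →+ ℝ) (v : Γ →+ ℤ)
    (hcl0 : ∀ X : C, IsZero X → cl X = 0)
    (hses : ∀ S : ShortComplex C, S.ShortExact → cl S.X₂ = cl S.X₁ + cl S.X₃)
    (hpos : ∀ X : C, ¬ IsZero X →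
      0 ≤ r (cl X) ∧ 0 ≤ v (cl X) ∧ (r (cl X) = 0 → 0 < d (cl X) ∧ v (cl X) = 0))
    (E : C) (hE : ¬ IsZero E) (hvE : v (cl E) = 1) (c : ℝ) :
    (IsPlusStableAt cl d r v c E → IsSemistableAt cl d r v c E) ∧
    (IsMinusStableAt cl d r v c E → IsSemistableAt cl d r v c E) := by
  have key : ∀ s : ℝ, s = 1 ∨ s = -1 →
      (∃ δ > (0:ℝ), ∀ ε : ℝ, 0 < ε → ε < δ → IsStableAt cl d r v (c + s * ε) E) →
      IsSemistableAt cl d r v c E := by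
    intro s hs ⟨δ, hδ, hst⟩ F f hf hF hfi
    have hlt : ∀ ε : ℝ, 0 < ε → ε < δ →
        (d (cl F) + c * (v (cl F) : ℝ)) * r (cl E) - (d (cl E) + c * (v (cl E) : ℝ)) * r (cl F)
        + (s * ((v (cl F) : ℝ) * r (cl E) - (v (cl E) : ℝ) * r (cl F))) * ε < 0 := by
      intro ε h1 h2
      have := hst ε h1 h2 F f hf hF hfi
      unfold slopeLT at this
      ring_nf at this ⊢
      nlinarith [this]
    have := affine_nonpos_of_small hδ hlt
    unfold slopeLE
    linarith
  constructor
  · intro ⟨δ, hδ, hst⟩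
    exact key 1 (Or.inl rfl) ⟨δ, hδ, fun ε h1 h2 => by simpa using hst ε h1 h2⟩
  · intro ⟨δ, hδ, hst⟩
    refine key (-1) (Or.inr rfl) ⟨δ, hδ, fun ε h1 h2 => ?_⟩
    have := hst ε h1 h2
    simpa [sub_eq_add_neg] using this
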